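/- Let H be a real Hilbert space, Q a nonempty closed convex subset of H, and g : Q × Q → ℝ a monotone bifunction on Q with g(u, u) = 0 for all u ∈ Q. Let α > 0, a ∈ H, and let w ∈ Q satisfy g(w, v) + (1/α)⟨v − w, w − a⟩ ≥ 0 for all v ∈ Q. If s ∈ Q satisfies g(s, v) ≥ 0 for all v ∈ Q, then ‖w − s‖² ≤ ‖a − s‖² − ‖w − a‖². -/

import Mathlib

/-- If `w = T_α^g(a)` is a resolvent point and `s` solves the equilibrium problem EP(Q, g),
then `‖w − s‖² ≤ ‖a − s‖² − ‖w − a‖²`. -/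
theorem resolvent_solution_estimate
    {H : Type*} [NormedAddCommGroup H] [InnerProductSpace ℝ H] [CompleteSpace H]
    (Q : Set H) (hQne : Q.Nonempty) (hQcl : IsClosed Q) (hQcv : Convex ℝ Q)
    (g : H → H → ℝ)
    (hg0 : ∀ u ∈ Q, g u u = 0)
    (hmono : ∀ u ∈ Q, ∀ v ∈ Q, g u v + g v u ≤ 0)
    (α : ℝ) (hα : 0 < α) (a : H)
    (w : H) (hwQ : w ∈ Q)
    (hw : ∀ v ∈ Q, g w v + (1 / α) * (inner ℝ (v - w) (w - a) : ℝ) ≥ 0)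
    (s : H) (hsQ : s ∈ Q) (hs : ∀ v ∈ Q, g s v ≥ 0) :
    ‖w - s‖ ^ 2 ≤ ‖a - s‖ ^ 2 - ‖w - a‖ ^ 2 := by
  have h1 := hw s hsQ
  have h2 := hmono w hwQ s hsQ
  have h3 := hs w hwQ
  have hgws : g w s ≤ 0 := by linarith
  have hα' : 0 < 1 / α := by positivity
  have key : (0:ℝ) ≤ inner ℝ (s - w) (w - a) := by nlinarith
  have hid : ‖a - s‖ ^ 2 = ‖w - s‖ ^ 2 + ‖w - a‖ ^ 2 + 2 * inner ℝ (s - w) (w - a) := by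
    have e1 := real_inner_self_eq_norm_sq (a - s)
    have e2 := real_inner_self_eq_norm_sq (w - s)
    have e3 := real_inner_self_eq_norm_sq (w - a)
    simp only [inner_sub_left, inner_sub_right] at *
    have c1 : (inner ℝ a s : ℝ) = inner ℝ s a := real_inner_comm s a
    have c2 : (inner ℝ w s : ℝ) = inner ℝ s w := real_inner_comm s w
    have c3 : (inner ℝ w a : ℝ) = inner ℝ a w := real_inner_comm a w
    linarith
  linarith
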